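/- Let f : V → W be a map of chain complexes equipped with filtrations F^p compatible with f (f(F^p V) ⊆ F^p W), where both filtrations are bounded above and complete. If the induced map gr f : gr V → gr W on associated graded complexes is a quasi-isomorphism, then f is a quasi-isomorphism. -/

import Mathlib

private lemma stmt5_seq_aux {A : Type*} (Inv : ℕ → A → Prop) (Delta : ℕ → A → A → Prop)
    (a₀ : A) (h₀ : Inv 0 a₀)
    (hstep : ∀ n a, Inv n a → ∃ a', Inv (n+1) a' ∧ Delta n a a') :
    ∃ g : ℕ → A, g 0 = a₀ ∧ (∀ n, Inv n (g n)) ∧ ∀ n, Delta n (g n) (g (n+1)) := by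
  choose F h1 h2 using hstep
  let G : ∀ n : ℕ, {a : A // Inv n a} :=
    fun n => Nat.rec ⟨a₀, h₀⟩ (fun n p => ⟨F n p.1 p.2, h1 n p.1 p.2⟩) n
  exact ⟨fun n => (G n).1, rfl, fun n => (G n).2, fun n => h2 n (G n).1 (G n).2⟩



/-- Let `f : V → W` be a map of chain complexes equipped with
decreasing filtrations `F^p` by subcomplexes, compatible with `f`
(`f (F^p V) ⊆ F^p W`), both filtrations being exhaustive, bounded above
(`F^p = ⊤` for `p` small) and complete (sequentially complete).  If the
induced map `gr f : gr V → gr W` on associated graded complexes is a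
quasi-isomorphism (expressed elementwise: `gr`-cycles of `W` are hit up to
`gr`-boundaries, and `gr`-cycles of `V` mapping to `gr`-boundaries are
`gr`-boundaries), then `f` is a quasi-isomorphism. -/
theorem stmt5 (R : Type*) [CommRing R]
    (V W : ℤ → Type*)
    [∀ i, AddCommGroup (V i)] [∀ i, Module R (V i)]
    [∀ i, AddCommGroup (W i)] [∀ i, Module R (W i)]
    (dV : ∀ (i j : ℤ), j = i - 1 → (V i →ₗ[R] V j))
    (dW : ∀ (i j : ℤ), j = i - 1 → (W i →ₗ[R] W j))
    (hdV : ∀ (i j : ℤ) (h : j = i - 1) (l : ℤ) (h' : l = j - 1) (x : V i),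
      dV j l h' (dV i j h x) = 0)
    (hdW : ∀ (i j : ℤ) (h : j = i - 1) (l : ℤ) (h' : l = j - 1) (x : W i),
      dW j l h' (dW i j h x) = 0)
    (f : ∀ i, V i →ₗ[R] W i)
    (hchain : ∀ (i j : ℤ) (h : j = i - 1) (x : V i),
      dW i j h (f i x) = f j (dV i j h x))
    (FV : ℤ → ∀ i, Submodule R (V i)) (FW : ℤ → ∀ i, Submodule R (W i))
    (hFVmono : ∀ p i, FV (p + 1) i ≤ FV p i)
    (hFWmono : ∀ p i, FW (p + 1) i ≤ FW p i)
    (hFVd : ∀ (p i j : ℤ) (h : j = i - 1), ∀ x ∈ FV p i, dV i j h x ∈ FV p j)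
    (hFWd : ∀ (p i j : ℤ) (h : j = i - 1), ∀ x ∈ FW p i, dW i j h x ∈ FW p j)
    (hcompatf : ∀ (p i : ℤ), ∀ x ∈ FV p i, f i x ∈ FW p i)
    -- bounded above (hence exhaustive)
    (hVbdd : ∀ i, ∃ N : ℤ, ∀ p ≤ N, FV p i = ⊤)
    (hWbdd : ∀ i, ∃ N : ℤ, ∀ p ≤ N, FW p i = ⊤)
    -- complete: Hausdorff and sequentially complete
    (hVhaus : ∀ i, (⨅ p : ℤ, FV p i) = ⊥)
    (hWhaus : ∀ i, (⨅ p : ℤ, FW p i) = ⊥)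
    (hVcomp : ∀ i (c : ℤ → V i), (∀ p, c (p + 1) - c p ∈ FV p i) →
      ∃ x : V i, ∀ p, x - c p ∈ FV p i)
    (hWcomp : ∀ i (c : ℤ → W i), (∀ p, c (p + 1) - c p ∈ FW p i) →
      ∃ x : W i, ∀ p, x - c p ∈ FW p i)
    -- gr f is a quasi-isomorphism:
    (hgr_surj : ∀ (p i : ℤ), ∀ y ∈ FW p i,
      dW i (i - 1) rfl y ∈ FW (p + 1) (i - 1) →
      ∃ x ∈ FV p i, dV i (i - 1) rfl x ∈ FV (p + 1) (i - 1) ∧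
        ∃ z ∈ FW p (i + 1), f i x - y - dW (i + 1) i (by omega) z ∈ FW (p + 1) i)
    (hgr_inj : ∀ (p i : ℤ), ∀ x ∈ FV p i,
      dV i (i - 1) rfl x ∈ FV (p + 1) (i - 1) →
      (∃ z ∈ FW p (i + 1), f i x - dW (i + 1) i (by omega) z ∈ FW (p + 1) i) →
      ∃ u ∈ FV p (i + 1), x - dV (i + 1) i (by omega) u ∈ FV (p + 1) i) :
    -- then f is a quasi-isomorphism:
    (∀ (i : ℤ) (y : W i), dW i (i - 1) rfl y = 0 →
      ∃ x : V i, dV i (i - 1) rfl x = 0 ∧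
        ∃ z : W (i + 1), f i x - y = dW (i + 1) i (by omega) z) ∧
    (∀ (i : ℤ) (x : V i), dV i (i - 1) rfl x = 0 →
      (∃ z : W (i + 1), f i x = dW (i + 1) i (by omega) z) →
      ∃ u : V (i + 1), x = dV (i + 1) i (by omega) u) := by

  classical
  -- antitonicity of the filtrations
  have hFVle : ∀ (p q i : ℤ), p ≤ q → FV q i ≤ FV p i := by
    intro p q i h
    refine Int.le_induction (m := p) (motive := fun q _ => FV q i ≤ FV p i) ?_ ?_ q h
    · exact le_rfl
    · exact fun n _ ih => (hFVmono n i).trans ih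
  have hFWle : ∀ (p q i : ℤ), p ≤ q → FW q i ≤ FW p i := by
    intro p q i h
    refine Int.le_induction (m := p) (motive := fun q _ => FW q i ≤ FW p i) ?_ ?_ q h
    · exact le_rfl
    · exact fun n _ ih => (hFWmono n i).trans ih
  -- flexible-degree versions of the gr hypotheses
  have hgr_surj' : ∀ (p i j k : ℤ) (hj : j = i - 1) (hk : i = k - 1),
      ∀ y ∈ FW p i, dW i j hj y ∈ FW (p+1) j →
      ∃ x ∈ FV p i, dV i j hj x ∈ FV (p+1) j ∧
        ∃ z ∈ FW p k, f i x - y - dW k i hk z ∈ FW (p+1) i := by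
    intro p i j k hj hk
    have hk' : k = i + 1 := by omega
    subst hk'; subst hj
    exact hgr_surj p i
  have hgr_inj' : ∀ (p i j k : ℤ) (hj : j = i - 1) (hk : i = k - 1),
      ∀ x ∈ FV p i, dV i j hj x ∈ FV (p+1) j →
      (∃ z ∈ FW p k, f i x - dW k i hk z ∈ FW (p+1) i) →
      ∃ u ∈ FV p k, x - dV k i hk u ∈ FV (p+1) i := by
    intro p i j k hj hk
    have hk' : k = i + 1 := by omega
    subst hk'; subst hj
    exact hgr_inj p i
  -- key step : gr-acyclicity of the cone of f
  have keyStep : ∀ (p i₀ i₁ i₂ i₃ : ℤ) (h01 : i₀ = i₁ - 1) (h12 : i₁ = i₂ - 1)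
      (h23 : i₂ = i₃ - 1), ∀ ξ ∈ FV p i₁, ∀ η ∈ FW p i₂,
      dV i₁ i₀ h01 ξ ∈ FV (p+1) i₀ →
      dW i₂ i₁ h12 η + f i₁ ξ ∈ FW (p+1) i₁ →
      ∃ α ∈ FV p i₂, ∃ β ∈ FW p i₃,
        ξ + dV i₂ i₁ h12 α ∈ FV (p+1) i₁ ∧
        η - dW i₃ i₂ h23 β - f i₂ α ∈ FW (p+1) i₂ := by
    intro p i₀ i₁ i₂ i₃ h01 h12 h23 ξ hξ η hη hdξ hcyc
    have h1 : f i₁ ξ - dW i₂ i₁ h12 (-η) ∈ FW (p+1) i₁ := by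
      have e : f i₁ ξ - dW i₂ i₁ h12 (-η) = dW i₂ i₁ h12 η + f i₁ ξ := by
        rw [map_neg]; abel
      rw [e]; exact hcyc
    obtain ⟨u, hu, hu2⟩ := hgr_inj' p i₁ i₀ i₂ h01 h12 ξ hξ hdξ ⟨-η, neg_mem hη, h1⟩
    have hy'mem : η + f i₂ u ∈ FW p i₂ := add_mem hη (hcompatf _ _ _ hu)
    have hdy' : dW i₂ i₁ h12 (η + f i₂ u) ∈ FW (p+1) i₁ := by
      have e : dW i₂ i₁ h12 (η + f i₂ u)
          = (dW i₂ i₁ h12 η + f i₁ ξ) - f i₁ (ξ - dV i₂ i₁ h12 u) := by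
        rw [map_add, hchain i₂ i₁ h12, map_sub]; abel
      rw [e]; exact sub_mem hcyc (hcompatf _ _ _ hu2)
    obtain ⟨x', hx', hdx', z', hz', hmain⟩ :=
      hgr_surj' p i₂ i₁ i₃ h12 h23 (η + f i₂ u) hy'mem hdy'
    refine ⟨x' - u, sub_mem hx' hu, -z', neg_mem hz', ?_, ?_⟩
    · have e : ξ + dV i₂ i₁ h12 (x' - u)
          = (ξ - dV i₂ i₁ h12 u) + dV i₂ i₁ h12 x' := by rw [map_sub]; abel
      rw [e]; exact add_mem hu2 hdx'
    · have e : η - dW i₃ i₂ h23 (-z') - f i₂ (x' - u)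
          = -(f i₂ x' - (η + f i₂ u) - dW i₃ i₂ h23 z') := by
        rw [map_neg, map_sub]; abel
      rw [e]; exact neg_mem hmain
  -- main limiting lemma
  have main : ∀ (i₀ i₁ i₂ i₃ : ℤ) (h01 : i₀ = i₁ - 1) (h12 : i₁ = i₂ - 1)
      (h23 : i₂ = i₃ - 1) (ξ : V i₁) (η : W i₂),
      dV i₁ i₀ h01 ξ = 0 → dW i₂ i₁ h12 η + f i₁ ξ = 0 →
      ∃ (α : V i₂) (β : W i₃),
        ξ + dV i₂ i₁ h12 α = 0 ∧ η - dW i₃ i₂ h23 β - f i₂ α = 0 := by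
    intro i₀ i₁ i₂ i₃ h01 h12 h23 ξ η hdξ hcyc
    obtain ⟨N₁, hN₁⟩ := hVbdd i₁
    obtain ⟨N₂, hN₂⟩ := hWbdd i₂
    obtain ⟨g, hg0, hInv, hDelta⟩ := stmt5_seq_aux
      (Inv := fun n (ab : V i₂ × W i₃) =>
        ξ + dV i₂ i₁ h12 ab.1 ∈ FV (min N₁ N₂ + n) i₁ ∧
        η - dW i₃ i₂ h23 ab.2 - f i₂ ab.1 ∈ FW (min N₁ N₂ + n) i₂)
      (Delta := fun n (ab ab' : V i₂ × W i₃) =>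
        ab'.1 - ab.1 ∈ FV (min N₁ N₂ + n) i₂ ∧ ab'.2 - ab.2 ∈ FW (min N₁ N₂ + n) i₃)
      (a₀ := ((0 : V i₂), (0 : W i₃)))
      (h₀ := by
        constructor
        · have : FV (min N₁ N₂ + (0:ℕ)) i₁ = ⊤ := by
            have : ((0:ℕ):ℤ) = 0 := rfl
            rw [this, add_zero]; exact hN₁ _ (min_le_left _ _)
          rw [this]; exact Submodule.mem_top
        · have : FW (min N₁ N₂ + (0:ℕ)) i₂ = ⊤ := by
            have : ((0:ℕ):ℤ) = 0 := rfl
            rw [this, add_zero]; exact hN₂ _ (min_le_right _ _)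
          rw [this]; exact Submodule.mem_top)
      (hstep := by
        rintro n ⟨a, b⟩ ⟨h1, h2⟩
        have hdξ' : dV i₁ i₀ h01 (ξ + dV i₂ i₁ h12 a) ∈ FV (min N₁ N₂ + n + 1) i₀ := by
          rw [map_add, hdξ, hdV i₂ i₁ h12 i₀ h01 a, add_zero]; exact zero_mem _
        have hcyc' : dW i₂ i₁ h12 (η - dW i₃ i₂ h23 b - f i₂ a)
            + f i₁ (ξ + dV i₂ i₁ h12 a) ∈ FW (min N₁ N₂ + n + 1) i₁ := by
          have e : dW i₂ i₁ h12 (η - dW i₃ i₂ h23 b - f i₂ a)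
              + f i₁ (ξ + dV i₂ i₁ h12 a) = dW i₂ i₁ h12 η + f i₁ ξ := by
            rw [map_sub, map_sub, map_add, hchain i₂ i₁ h12,
              hdW i₃ i₂ h23 i₁ h12 b]
            abel
          rw [e, hcyc]; exact zero_mem _
        obtain ⟨α, hα, β, hβ, hA, hB⟩ := keyStep (min N₁ N₂ + n) i₀ i₁ i₂ i₃ h01 h12 h23
          _ h1 _ h2 hdξ' hcyc'
        refine ⟨(a + α, b + β), ⟨?_, ?_⟩, ?_, ?_⟩
        · have ecast : min N₁ N₂ + ((n+1 : ℕ) : ℤ) = (min N₁ N₂ + n) + 1 := by push_cast; ring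
          rw [ecast]
          have e : ξ + dV i₂ i₁ h12 (a + α)
              = (ξ + dV i₂ i₁ h12 a) + dV i₂ i₁ h12 α := by rw [map_add]; abel
          rw [e]; exact hA
        · have ecast : min N₁ N₂ + ((n+1 : ℕ) : ℤ) = (min N₁ N₂ + n) + 1 := by push_cast; ring
          rw [ecast]
          have e : η - dW i₃ i₂ h23 (b + β) - f i₂ (a + α)
              = (η - dW i₃ i₂ h23 b - f i₂ a) - dW i₃ i₂ h23 β - f i₂ α := by
            rw [map_add, map_add]; abel
          rw [e]; exact hB
        · have e : (a + α, b + β).1 - (a, b).1 = α := by simp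
          rw [e]; exact hα
        · have e : (a + α, b + β).2 - (a, b).2 = β := by simp
          rw [e]; exact hβ)
    set p₀ := min N₁ N₂ with hp₀
    -- limits
    obtain ⟨xlim, hxlim⟩ := hVcomp i₂ (fun p => (g (p - p₀).toNat).1) (by
      intro p
      by_cases hp : p₀ ≤ p
      · have e1 : (p + 1 - p₀).toNat = (p - p₀).toNat + 1 := by omega
        have e2 : p₀ + (((p - p₀).toNat : ℕ) : ℤ) = p := by omega
        simp only [e1]
        have := (hDelta ((p - p₀).toNat)).1
        rw [e2] at this; exact this
      · have e1 : (p + 1 - p₀).toNat = 0 := by omega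
        have e2 : (p - p₀).toNat = 0 := by omega
        simp only [e1, e2, sub_self]; exact zero_mem _)
    obtain ⟨zlim, hzlim⟩ := hWcomp i₃ (fun p => (g (p - p₀).toNat).2) (by
      intro p
      by_cases hp : p₀ ≤ p
      · have e1 : (p + 1 - p₀).toNat = (p - p₀).toNat + 1 := by omega
        have e2 : p₀ + (((p - p₀).toNat : ℕ) : ℤ) = p := by omega
        simp only [e1]
        have := (hDelta ((p - p₀).toNat)).2
        rw [e2] at this; exact this
      · have e1 : (p + 1 - p₀).toNat = 0 := by omega
        have e2 : (p - p₀).toNat = 0 := by omega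
        simp only [e1, e2, sub_self]; exact zero_mem _)
    refine ⟨xlim, zlim, ?_, ?_⟩
    · have hall : ∀ p, ξ + dV i₂ i₁ h12 xlim ∈ FV p i₁ := by
        intro p
        have hq2 : p ≤ max p p₀ := le_max_left _ _
        have hqn : p₀ + (((max p p₀ - p₀).toNat : ℕ) : ℤ) = max p p₀ := by omega
        have e : ξ + dV i₂ i₁ h12 xlim
            = (ξ + dV i₂ i₁ h12 (g ((max p p₀ - p₀).toNat)).1)
              + dV i₂ i₁ h12 (xlim - (g ((max p p₀ - p₀).toNat)).1) := by
          rw [map_sub]; abel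
        rw [e]
        refine add_mem (hFVle p _ i₁ hq2 ?_) (hFVle p _ i₁ hq2 ?_)
        · have := (hInv ((max p p₀ - p₀).toNat)).1
          rw [hqn] at this; exact this
        · exact hFVd _ i₂ i₁ h12 _ (hxlim (max p p₀))
      have : ξ + dV i₂ i₁ h12 xlim ∈ ⨅ p, FV p i₁ := Submodule.mem_iInf _ |>.2 hall
      rw [hVhaus i₁] at this
      simpa using this
    · have hall : ∀ p, η - dW i₃ i₂ h23 zlim - f i₂ xlim ∈ FW p i₂ := by
        intro p
        have hq2 : p ≤ max p p₀ := le_max_left _ _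
        have hqn : p₀ + (((max p p₀ - p₀).toNat : ℕ) : ℤ) = max p p₀ := by omega
        have e : η - dW i₃ i₂ h23 zlim - f i₂ xlim
            = (η - dW i₃ i₂ h23 (g ((max p p₀ - p₀).toNat)).2
                - f i₂ (g ((max p p₀ - p₀).toNat)).1)
              - dW i₃ i₂ h23 (zlim - (g ((max p p₀ - p₀).toNat)).2)
              - f i₂ (xlim - (g ((max p p₀ - p₀).toNat)).1) := by
          rw [map_sub, map_sub]; abel
        rw [e]
        refine sub_mem (sub_mem (hFWle p _ i₂ hq2 ?_) (hFWle p _ i₂ hq2 ?_))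
          (hFWle p _ i₂ hq2 ?_)
        · have := (hInv ((max p p₀ - p₀).toNat)).2
          rw [hqn] at this; exact this
        · exact hFWd _ i₃ i₂ h23 _ (hzlim (max p p₀))
        · exact hcompatf _ i₂ _ (hxlim (max p p₀))
      have : η - dW i₃ i₂ h23 zlim - f i₂ xlim ∈ ⨅ p, FW p i₂ :=
        Submodule.mem_iInf _ |>.2 hall
      rw [hWhaus i₂] at this
      simpa using this
  constructor
  · -- surjectivity on homology
    intro i y hdy
    have h23 : i = (i + 1) - 1 := by omega
    obtain ⟨α, β, hA, hB⟩ := main (i - 1 - 1) (i - 1) i (i + 1) rfl rfl h23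
      (0 : V (i - 1)) y (by rw [map_zero]) (by rw [hdy, map_zero, zero_add])
    refine ⟨α, ?_, ⟨-β, ?_⟩⟩
    · have : (0 : V (i-1)) + dV i (i-1) rfl α = dV i (i-1) rfl α := by abel
      rw [this] at hA; exact hA
    · show f i α - y = dW (i + 1) i h23 (-β)
      rw [map_neg, ← sub_eq_zero]
      have e : f i α - y - -dW (i+1) i h23 β
          = -(y - dW (i+1) i h23 β - f i α) := by abel
      rw [e, hB, neg_zero]
  · -- injectivity on homology
    rintro i x hdx ⟨z₀, hz₀⟩
    have h12 : i = (i + 1) - 1 := by omega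
    have h23 : i + 1 = (i + 2) - 1 := by omega
    have hz₀' : f i x = dW (i+1) i h12 z₀ := hz₀
    obtain ⟨α, β, hA, hB⟩ := main (i - 1) i (i + 1) (i + 2) rfl h12 h23
      x (-z₀) hdx (by rw [map_neg, hz₀', neg_add_cancel])
    refine ⟨-α, ?_⟩
    show x = dV (i+1) i h12 (-α)
    rw [map_neg, eq_neg_iff_add_eq_zero]
    exact hA
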